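/- Regret decomposition for the general minimax framework: Let Π, Ψ, Φ be finite nonempty sets, let u : Ψ → ℝ and w : Ψ × Π → ℝ be functions, let η > 0, and for each π ∈ Π and ρ ∈ Δ(Φ) let D^π(· ∥ ρ) : Δ(Ψ) → ℝ be convex, continuous, and differentiable on a neighborhood of Δ(Ψ). Define AIR_η(p, ν; ρ) = E_{π∼p} E_{ψ∼ν}[ u(ψ) − w(ψ, π) ] − (1/η) · E_{π∼p}[ D^π(ν ∥ ρ) ] for p ∈ Δ(Π), ν ∈ Δ(Ψ). Fix T ≥ 1, and for each t ∈ {1,…,T} let ρ_t ∈ Δ(Φ), let p_t ∈ Δ(Π) be a minimizer of p ↦ max_{ν∈Δ(Ψ)} AIR_η(p, ν; ρ_t), let ν_t ∈ Δ(Ψ) be a maximizer of ν ↦ AIR_η(p_t, ν; ρ_t), and let ψ_t ∈ Ψ with Dirac distribution δ_{ψ_t} ∈ Δ(Ψ). Then Σ_{t=1}^T ( u(ψ_t) − E_{π∼p_t}[ w(ψ_t, π) ] ) ≤ Σ_{t=1}^T min_{p∈Δ(Π)} max_{ν∈Δ(Ψ)} AIR_η(p, ν; ρ_t) + (1/η)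 · Σ_{t=1}^T E_{π∼p_t}[ D^π(δ_{ψ_t} ∥ ρ_t) − Breg_{D^π(·∥ρ_t)}(δ_{ψ_t}, ν_t) ]. -/

import Mathlib

open Finset

/-- The Algorithmic-Information-Ratio objective
`AIR_η(p, ν; ρ) = E_{π∼p} E_{ψ∼ν}[u(ψ) − w(ψ, π)] − (1/η)·E_{π∼p}[D^π(ν ∥ ρ)]`. -/
noncomputable def AIR {Pol Psi Phi : Type*} [Fintype Pol] [Fintype Psi]
    (u : Psi → ℝ) (w : Psi → Pol → ℝ) (η : ℝ)
    (D : Pol → (Phi → ℝ) → (Psi → ℝ) → ℝ) (ρ : Phi → ℝ)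
    (p : Pol → ℝ) (ν : Psi → ℝ) : ℝ :=
  (∑ π, p π * ∑ ψ, ν ψ * (u ψ - w ψ π)) - (1 / η) * ∑ π, p π * D π ρ ν

/-- The Dirac distribution `δ_{ψ₀} ∈ Δ(Ψ)`. -/
noncomputable def diracDist {Psi : Type*} [DecidableEq Psi] (ψ0 : Psi) : Psi → ℝ :=
  fun ψ => if ψ = ψ0 then 1 else 0

lemma deriv_nonpos_of_max (g : ℝ → ℝ) (a : ℝ) (hg : HasDerivAt g a 0)
    (h : ∀ s ∈ Set.Ioc (0:ℝ) 1, g s ≤ g 0) : a ≤ 0 := by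
  have h1 : Filter.Tendsto (slope g 0) (nhdsWithin 0 (Set.Ioi 0)) (nhds a) :=
    (hasDerivAt_iff_tendsto_slope.mp hg).mono_left
      (nhdsWithin_mono _ (fun x hx => ne_of_gt hx))
  refine le_of_tendsto h1 ?_
  filter_upwards [Ioc_mem_nhdsGT_of_mem (by norm_num : (0:ℝ) ∈ Set.Ico (0:ℝ) 1)] with s hs
  have hle := h s hs
  rw [slope_def_field]
  apply div_nonpos_of_nonpos_of_nonneg (by linarith)
  linarith [hs.1]

/-- Regret decomposition for the general minimax framework: if in each round `t` the learner
plays the minimax distribution `p_t` of `AIR_η(·, ·; ρ_t)` and `ν_t` is the corresponding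
best response, then for any comparator sequence `ψ_t`,
`Σ_t (u(ψ_t) − E_{π∼p_t}[w(ψ_t, π)]) ≤ Σ_t min_p max_ν AIR_η(p, ν; ρ_t)
  + (1/η) Σ_t E_{π∼p_t}[D^π(δ_{ψ_t} ∥ ρ_t) − Breg_{D^π(·∥ρ_t)}(δ_{ψ_t}, ν_t)]`. -/
theorem regret_decomposition_general_framework
    {Pol Psi Phi : Type*} [Fintype Pol] [Nonempty Pol]
    [Fintype Psi] [Nonempty Psi] [DecidableEq Psi] [Fintype Phi] [Nonempty Phi]
    (u : Psi → ℝ) (w : Psi → Pol → ℝ) (η : ℝ) (hη : 0 < η)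
    (D : Pol → (Phi → ℝ) → (Psi → ℝ) → ℝ)
    (hconv : ∀ π, ∀ ρ ∈ stdSimplex ℝ Phi, ConvexOn ℝ (stdSimplex ℝ Psi) (D π ρ))
    (hcont : ∀ π, ∀ ρ ∈ stdSimplex ℝ Phi, ContinuousOn (D π ρ) (stdSimplex ℝ Psi))
    (hdiff : ∀ π, ∀ ρ ∈ stdSimplex ℝ Phi, ∃ U : Set (Psi → ℝ),
      IsOpen U ∧ stdSimplex ℝ Psi ⊆ U ∧ DifferentiableOn ℝ (D π ρ) U)
    (T : ℕ) (hT : 1 ≤ T)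
    (ρ : ℕ → Phi → ℝ) (hρ : ∀ t, ρ t ∈ stdSimplex ℝ Phi)
    (p : ℕ → Pol → ℝ) (hp : ∀ t, p t ∈ stdSimplex ℝ Pol)
    (hpmin : ∀ t, 1 ≤ t → t ≤ T → ∀ p' ∈ stdSimplex ℝ Pol,
      (⨆ ν' : stdSimplex ℝ Psi, AIR u w η D (ρ t) (p t) ν')
        ≤ ⨆ ν' : stdSimplex ℝ Psi, AIR u w η D (ρ t) p' ν')
    (ν : ℕ → Psi → ℝ) (hν : ∀ t, ν t ∈ stdSimplex ℝ Psi)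
    (hνmax : ∀ t, 1 ≤ t → t ≤ T → ∀ ν' ∈ stdSimplex ℝ Psi,
      AIR u w η D (ρ t) (p t) ν' ≤ AIR u w η D (ρ t) (p t) (ν t))
    (ψ : ℕ → Psi) :
    ∑ t ∈ Icc 1 T, (u (ψ t) - ∑ π, p t π * w (ψ t) π)
      ≤ (∑ t ∈ Icc 1 T, ⨅ p' : stdSimplex ℝ Pol, ⨆ ν' : stdSimplex ℝ Psi,
            AIR u w η D (ρ t) p' ν')
        + (1 / η) * ∑ t ∈ Icc 1 T, ∑ π, p t π *
            (D π (ρ t) (diracDist (ψ t))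
              - (D π (ρ t) (diracDist (ψ t)) - D π (ρ t) (ν t)
                  - fderiv ℝ (D π (ρ t)) (ν t) (diracDist (ψ t) - ν t))) := by
  have round : ∀ t ∈ Icc 1 T,
      u (ψ t) - ∑ π, p t π * w (ψ t) π
        ≤ (⨅ p' : stdSimplex ℝ Pol, ⨆ ν' : stdSimplex ℝ Psi, AIR u w η D (ρ t) p' ν')
          + (1 / η) * ∑ π, p t π *
              (D π (ρ t) (diracDist (ψ t))
                - (D π (ρ t) (diracDist (ψ t)) - D π (ρ t) (ν t)
                    - fderiv ℝ (D π (ρ t)) (ν t) (diracDist (ψ t) - ν t))) := by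
    intro t ht
    rw [Finset.mem_Icc] at ht
    obtain ⟨ht1, ht2⟩ := ht
    set δ : Psi → ℝ := diracDist (ψ t) with hδdef
    set d : Psi → ℝ := δ - ν t with hddef
    -- Dirac in simplex
    have hδ : δ ∈ stdSimplex ℝ Psi := by
      constructor
      · intro x; simp only [hδdef, diracDist]; split <;> norm_num
      · simp [hδdef, diracDist, Finset.sum_ite_eq']
    -- differentiability at ν t
    have hDA : ∀ π : Pol, DifferentiableAt ℝ (D π (ρ t)) (ν t) := by
      intro π
      obtain ⟨U, hUo, hUs, hUd⟩ := hdiff π (ρ t) (hρ t)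
      exact (hUd (ν t) (hUs (hν t))).differentiableAt (hUo.mem_nhds (hUs (hν t)))
    -- the directional derivative
    set a : ℝ := (∑ π, p t π * ∑ ψ', d ψ' * (u ψ' - w ψ' π))
        - (1 / η) * ∑ π, p t π * fderiv ℝ (D π (ρ t)) (ν t) d with hadef
    have hcurve : HasDerivAt (fun s : ℝ => ν t + s • d) d 0 := by
      simpa using (((hasDerivAt_id (0:ℝ)).smul_const d).const_add (ν t))
    have hzero : ν t + (0:ℝ) • d = ν t := by simp
    have hg : HasDerivAt (fun s : ℝ => AIR u w η D (ρ t) (p t) (ν t + s • d)) a 0 := by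
      unfold AIR
      apply HasDerivAt.sub
      · apply HasDerivAt.fun_sum
        intro π _
        apply HasDerivAt.const_mul
        apply HasDerivAt.fun_sum
        intro ψ' _
        have : HasDerivAt (fun s : ℝ => (ν t ψ' + s * d ψ') * (u ψ' - w ψ' π))
            (1 * d ψ' * (u ψ' - w ψ' π)) 0 :=
          (((hasDerivAt_id (0:ℝ)).mul_const (d ψ')).const_add (ν t ψ')).mul_const _
        simpa [Pi.add_apply, Pi.smul_apply, smul_eq_mul] using this
      · apply HasDerivAt.const_mul
        apply HasDerivAt.fun_sum
        intro π _
        apply HasDerivAt.const_mul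
        have hF : HasFDerivAt (D π (ρ t)) (fderiv ℝ (D π (ρ t)) (ν t)) (ν t + (0:ℝ) • d) := by
          rw [hzero]; exact (hDA π).hasFDerivAt
        exact hF.comp_hasDerivAt 0 hcurve
    -- optimality gives a ≤ 0
    have ha : a ≤ 0 := by
      apply deriv_nonpos_of_max _ _ hg
      intro s hs
      have hmem : ν t + s • d ∈ stdSimplex ℝ Psi := by
        have heq : ν t + s • d = (1 - s) • ν t + s • δ := by
          rw [hddef]; module
        rw [heq]
        exact (convex_stdSimplex ℝ Psi) (hν t) hδ (by linarith [hs.2]) (le_of_lt hs.1)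
          (by ring)
      rw [hzero]
      exact hνmax t ht1 ht2 _ hmem
    have hsum1 : ∑ π, p t π = 1 := (hp t).2
    -- key algebraic identity
    have hδc : ∀ π, ∑ ψ', δ ψ' * (u ψ' - w ψ' π) = u (ψ t) - w (ψ t) π := by
      intro π
      simp [hδdef, diracDist, ite_mul, Finset.sum_ite_eq']
    have hsplit : ∀ π, (∑ ψ', ν t ψ' * (u ψ' - w ψ' π)) + ∑ ψ', d ψ' * (u ψ' - w ψ' π)
        = u (ψ t) - w (ψ t) π := by
      intro π
      rw [← hδc π, ← Finset.sum_add_distrib]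
      apply Finset.sum_congr rfl
      intro ψ' _
      have : d ψ' = δ ψ' - ν t ψ' := by rw [hddef]; simp
      rw [this]; ring
    have key : u (ψ t) - ∑ π, p t π * w (ψ t) π
        = AIR u w η D (ρ t) (p t) (ν t) + a
          + (1 / η) * ∑ π, p t π *
              (D π (ρ t) δ - (D π (ρ t) δ - D π (ρ t) (ν t)
                  - fderiv ℝ (D π (ρ t)) (ν t) d)) := by
      have lhs_eq : u (ψ t) - ∑ π, p t π * w (ψ t) π
          = ∑ π, p t π * (u (ψ t) - w (ψ t) π) := by
        simp only [mul_sub]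
        rw [Finset.sum_sub_distrib, ← Finset.sum_mul, hsum1, one_mul]
      rw [lhs_eq, hadef]
      unfold AIR
      rw [Finset.mul_sum, Finset.mul_sum, Finset.mul_sum, ← Finset.sum_sub_distrib,
        ← Finset.sum_sub_distrib, ← Finset.sum_add_distrib, ← Finset.sum_add_distrib]
      apply Finset.sum_congr rfl
      intro π _
      rw [← hsplit π]
      ring
    -- minimax bound
    have hup : AIR u w η D (ρ t) (p t) (ν t)
        ≤ ⨅ p' : stdSimplex ℝ Pol, ⨆ ν' : stdSimplex ℝ Psi, AIR u w η D (ρ t) p' ν' := by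
      have : Nonempty (stdSimplex ℝ Pol) := ⟨⟨p t, hp t⟩⟩
      apply le_ciInf
      intro p'
      have hbdd : BddAbove (Set.range fun ν' : stdSimplex ℝ Psi =>
          AIR u w η D (ρ t) (p t) ν') := by
        refine ⟨AIR u w η D (ρ t) (p t) (ν t), ?_⟩
        rintro x ⟨ν', rfl⟩
        exact hνmax t ht1 ht2 ν' ν'.2
      calc AIR u w η D (ρ t) (p t) (ν t)
          ≤ ⨆ ν' : stdSimplex ℝ Psi, AIR u w η D (ρ t) (p t) ν' :=
            le_ciSup hbdd ⟨ν t, hν t⟩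
        _ ≤ ⨆ ν' : stdSimplex ℝ Psi, AIR u w η D (ρ t) p' ν' :=
            hpmin t ht1 ht2 p' p'.2
    rw [key]
    have h2 : AIR u w η D (ρ t) (p t) (ν t) + a
        ≤ ⨅ p' : stdSimplex ℝ Pol, ⨆ ν' : stdSimplex ℝ Psi, AIR u w η D (ρ t) p' ν' := by
      linarith [hup, ha]
    exact add_le_add_left h2 _
  calc ∑ t ∈ Icc 1 T, (u (ψ t) - ∑ π, p t π * w (ψ t) π)
      ≤ ∑ t ∈ Icc 1 T, ((⨅ p' : stdSimplex ℝ Pol, ⨆ ν' : stdSimplex ℝ Psi,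
            AIR u w η D (ρ t) p' ν')
          + (1 / η) * ∑ π, p t π *
              (D π (ρ t) (diracDist (ψ t))
                - (D π (ρ t) (diracDist (ψ t)) - D π (ρ t) (ν t)
                    - fderiv ℝ (D π (ρ t)) (ν t) (diracDist (ψ t) - ν t)))) :=
        Finset.sum_le_sum round
    _ = _ := by rw [Finset.sum_add_distrib, Finset.mul_sum]
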